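/- Up to Z/2-equivariant affine isomorphism, every affine involution on a torus T = V/Λ whose linear part is an indecomposable integral representation of Z/2 is one of exactly four types: (1) T = R/Z with σ(t) = t; (2) T = R/Z with σ(t) = t + 1/2; (3) T = R/Z with σ(t) = -t; (4) T = R²/Z² with σ(t₁,t₂) = (t₂,t₁). -/

import Mathlib

open scoped TensorProduct

/-- The real vector space `V = ℝ ⊗_ℤ Λ` spanned by the lattice `Λ`. -/
abbrev VR (Λ : Type) [AddCommGroup Λ] : Type := ℝ ⊗[ℤ] Λ

/-- The lattice `Λ` embedded in `V = ℝ ⊗_ℤ Λ` as `x ↦ 1 ⊗ x`. -/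
noncomputable def latticeSub (Λ : Type) [AddCommGroup Λ] : AddSubgroup (VR Λ) :=
  (((TensorProduct.mk ℤ ℝ Λ) 1).toAddMonoidHom).range

/-- The torus `T = (Λ ⊗ ℝ)/Λ`. -/
abbrev TorusT (Λ : Type) [AddCommGroup Λ] : Type := VR Λ ⧸ latticeSub Λ

/-- The linear extension of `σ : Λ → Λ` to `V = ℝ ⊗_ℤ Λ`. -/
noncomputable def σV (Λ : Type) [AddCommGroup Λ] (σ : Λ →+ Λ) : VR Λ →+ VR Λ :=
  (LinearMap.lTensor ℝ σ.toIntLinearMap).toAddMonoidHom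

theorem σV_lattice (Λ : Type) [AddCommGroup Λ] (σ : Λ →+ Λ) :
    latticeSub Λ ≤ (latticeSub Λ).comap (σV Λ σ) := by
  rintro _ ⟨x, rfl⟩
  exact ⟨σ x, by simp [σV, TensorProduct.mk_apply, LinearMap.lTensor_tmul]⟩

/-- The linear involution on the torus `T = (Λ ⊗ ℝ)/Λ` induced by `σ : Λ → Λ`. -/
noncomputable def σT (Λ : Type) [AddCommGroup Λ] (σ : Λ →+ Λ) : TorusT Λ →+ TorusT Λ :=
  QuotientAddGroup.map (latticeSub Λ) (latticeSub Λ) (σV Λ σ) (σV_lattice Λ σ)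

/-- The circle `ℝ/ℤ`. -/
abbrev 𝕊 : Type := AddCircle (1 : ℝ)

section Alg
variable {Λ : Type} [AddCommGroup Λ]

/-- Range and kernel of an idempotent endomorphism are complementary. -/
lemma isCompl_of_idem (Φ : Λ →+ Λ) (h : ∀ x, Φ (Φ x) = Φ x) :
    IsCompl Φ.range Φ.ker := by
  constructor
  · rw [AddSubgroup.disjoint_def]
    rintro x ⟨y, rfl⟩ hk
    have h0 : Φ (Φ y) = 0 := hk
    rw [h] at h0; exact h0
  · rw [codisjoint_iff_le_sup]
    intro x _
    rw [AddSubgroup.mem_sup]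
    exact ⟨Φ x, ⟨x, rfl⟩, x - Φ x, by simp [AddMonoidHom.mem_ker, map_sub, h], by abel⟩

/-- A projection onto a "pure" submodule `A` (one closed under division). -/
lemma exists_retraction [Module.Free ℤ Λ] [Module.Finite ℤ Λ] (A : Submodule ℤ Λ)
    (htf : ∀ (k : ℤ) (x : Λ), k ≠ 0 → k • x ∈ A → x ∈ A) :
    ∃ p : Λ →ₗ[ℤ] Λ, (∀ x, p x ∈ A) ∧ (∀ x ∈ A, p x = x) := by
  haveI : NoZeroSMulDivisors ℤ (Λ ⧸ A) := by
    constructor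
    intro k xq h
    by_cases hk : k = 0
    · exact Or.inl hk
    · right
      obtain ⟨x, rfl⟩ := A.mkQ_surjective xq
      have : A.mkQ (k • x) = 0 := by simpa using h
      rw [Submodule.mkQ_apply, Submodule.Quotient.mk_eq_zero] at this
      simpa [Submodule.Quotient.mk_eq_zero] using htf k x hk this
  haveI : Module.Free ℤ (Λ ⧸ A) := Module.free_of_finite_type_torsion_free'
  obtain ⟨ρ, hρ⟩ := LinearMap.exists_rightInverse_of_surjective A.mkQ
    (by rw [Submodule.range_mkQ])
  refine ⟨LinearMap.id - ρ.comp A.mkQ, fun x => ?_, fun x hx => ?_⟩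
  · rw [← Submodule.Quotient.mk_eq_zero (p := A)]
    have : A.mkQ (ρ (A.mkQ x)) = A.mkQ x := by
      have := congrArg (fun f => f (A.mkQ x)) hρ
      simpa using this
    simpa [Submodule.mkQ_apply, sub_eq_zero] using this.symm
  · have hx0 : A.mkQ x = 0 := by rwa [Submodule.mkQ_apply, Submodule.Quotient.mk_eq_zero]
    simp [hx0]

/-- Given `a ∈ A` not divisible by 2 in `Λ`, we can shift it by an element of `2A`
to make it primitive (admitting a functional with value 1). -/
lemma exists_unit_functional [Module.Free ℤ Λ] [Module.Finite ℤ Λ]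
    (A : Submodule ℤ Λ) (p : Λ →ₗ[ℤ] Λ) (hpmem : ∀ x, p x ∈ A) (hpid : ∀ x ∈ A, p x = x)
    (a : Λ) (ha : a ∈ A) (h2 : ∀ y : Λ, a ≠ (2:ℤ) • y) :
    ∃ (α : Λ) (φ : Λ →+ ℤ), α ∈ A ∧ φ (a + (2:ℤ) • α) = 1 := by
  obtain ⟨n, v⟩ := Submodule.basisOfPid (Module.Free.chooseBasis ℤ Λ) A
  set c : Fin n →₀ ℤ := v.repr ⟨a, ha⟩ with hc
  have hodd : ∃ i, ¬ (2 ∣ c i) := by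
    by_contra h
    push_neg at h
    set y : A := ∑ i, (c i / 2) • v i with hy
    have hay : (⟨a, ha⟩ : A) = (2:ℤ) • y := by
      have hsum : (⟨a, ha⟩ : A) = ∑ i, c i • v i := (v.sum_repr _).symm
      rw [hsum, hy, Finset.smul_sum]
      congr 1
      funext i
      rw [smul_smul]
      congr 1
      exact (Int.mul_ediv_cancel' (h i)).symm
    exact h2 (y : Λ) (by simpa using congrArg (A.subtype) hay)
  obtain ⟨i, hi⟩ := hodd
  set α : A := -(∑ j, (c j / 2) • v j) with hα
  refine ⟨(α : Λ), ((Finsupp.lapply i).comp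
      (v.repr.toLinearMap.comp (LinearMap.codRestrict A p hpmem))).toAddMonoidHom,
    α.2, ?_⟩
  have hmem : a + (2:ℤ) • (α : Λ) ∈ A := by
    have := A.add_mem ha (A.smul_mem (2:ℤ) α.2)
    simpa using this
  have hval : (⟨a + (2:ℤ) • (α : Λ), hmem⟩ : A) = ⟨a, ha⟩ + (2:ℤ) • α := by
    apply Subtype.ext; simp
  have hri : v.repr α i = -(c i / 2) := by
    rw [hα, map_neg, map_sum, Finsupp.coe_neg, Pi.neg_apply, Finsupp.coe_finset_sum,
      Finset.sum_apply]
    congr 1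
    rw [Finset.sum_eq_single i]
    · rw [map_smul]; simp [Module.Basis.repr_self]
    · intro j _ hj; rw [map_smul]; simp [Module.Basis.repr_self, Finsupp.single_apply, hj]
    · simp
  have hrepr : v.repr (⟨a, ha⟩ + (2:ℤ) • α) i = c i - 2 * (c i / 2) := by
    rw [map_add, map_smul]
    simp only [Finsupp.coe_add, Finsupp.coe_smul, Pi.add_apply, Pi.smul_apply, hri,
      smul_eq_mul]
    rw [← hc]
    ring
  have hpa : p (a + (2:ℤ) • (α : Λ)) = a + (2:ℤ) • (α : Λ) := hpid _ hmem
  simp only [LinearMap.toAddMonoidHom_coe, LinearMap.coe_comp, Function.comp_apply,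
    LinearEquiv.coe_toLinearMap, Finsupp.lapply_apply]
  have hcod : (LinearMap.codRestrict A p hpmem) (a + (2:ℤ) • (α : Λ))
      = ⟨a + (2:ℤ) • (α : Λ), hmem⟩ := by
    apply Subtype.ext
    simpa using hpa
  rw [hcod, hval, hrepr]
  omega

lemma equiv_int_of_indec (Λ : Type) [AddCommGroup Λ] [Module.Free ℤ Λ] [Module.Finite ℤ Λ]
    [Nontrivial Λ]
    (hindec : ∀ A B : AddSubgroup Λ, IsCompl A B → A = ⊥ ∨ B = ⊥) :
    Nonempty (Λ ≃+ ℤ) := by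
  set ι := Module.Free.ChooseBasisIndex ℤ Λ
  set b : Module.Basis ι ℤ Λ := Module.Free.chooseBasis ℤ Λ with hb
  haveI : Nonempty ι := b.index_nonempty
  by_cases hs : Subsingleton ι
  · haveI : Unique ι := ⟨⟨Classical.arbitrary ι⟩, fun a => Subsingleton.elim a _⟩
    exact ⟨b.repr.toAddEquiv.trans AddEquiv.finsuppUnique⟩
  · exfalso
    rw [not_subsingleton_iff_nontrivial] at hs
    obtain ⟨i, j, hij⟩ := exists_pair_ne ι
    set Φ : Λ →+ Λ :=
      { toFun := fun x => b.repr x i • b i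
        map_zero' := by simp
        map_add' := by
          intro x y
          show (b.repr (x+y)) i • b i = _
          rw [map_add]
          simp [add_smul] } with hΦ
    have hid : ∀ x, Φ (Φ x) = Φ x := by
      intro x
      simp only [hΦ, AddMonoidHom.coe_mk, ZeroHom.coe_mk, map_smul, Module.Basis.repr_self]
      simp [Finsupp.single_apply]
    rcases hindec _ _ (isCompl_of_idem Φ hid) with h | h
    · have hbi : b i ∈ Φ.range := ⟨b i, by simp [hΦ, Module.Basis.repr_self]⟩
      rw [h, AddSubgroup.mem_bot] at hbi
      exact b.ne_zero i hbi
    · have hbj : b j ∈ Φ.ker := by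
        simp [AddMonoidHom.mem_ker, hΦ, Module.Basis.repr_self, Finsupp.single_apply, hij.symm]
      rw [h, AddSubgroup.mem_bot] at hbj
      exact b.ne_zero j hbj

theorem classifyRep (Λ : Type) [AddCommGroup Λ] [Module.Free ℤ Λ] [Module.Finite ℤ Λ]
    [Nontrivial Λ]
    (σ : Λ →+ Λ) (hσ : ∀ x, σ (σ x) = x)
    (hindec : ∀ A B : AddSubgroup Λ, (∀ x ∈ A, σ x ∈ A) → (∀ x ∈ B, σ x ∈ B) →
      IsCompl A B → A = ⊥ ∨ B = ⊥) :
    (∃ e : Λ ≃+ ℤ, ∀ x, e (σ x) = e x) ∨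
    (∃ e : Λ ≃+ ℤ, ∀ x, e (σ x) = -(e x)) ∨
    (∃ e : Λ ≃+ (ℤ × ℤ), ∀ x, e (σ x) = (e x).swap) := by
  classical
  have htf0 : ∀ (k : ℤ) (x : Λ), k ≠ 0 → k • x = 0 → x = 0 := by
    intro k x hk h
    rcases smul_eq_zero.mp h with h | h
    · exact absurd h hk
    · exact h
  by_cases hAB : ∀ x : Λ, ∃ y w, σ y = y ∧ σ w = -w ∧ x = y + w
  · -- Λ = A ⊕ B
    set A : AddSubgroup Λ :=
      { carrier := {x | σ x = x}
        zero_mem' := map_zero σ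
        add_mem' := fun hx hy => by
          simp only [Set.mem_setOf_eq] at *; rw [map_add, hx, hy]
        neg_mem' := fun hx => by
          simp only [Set.mem_setOf_eq] at *; rw [map_neg, hx] } with hA
    set B : AddSubgroup Λ :=
      { carrier := {x | σ x = -x}
        zero_mem' := by simp [map_zero σ]
        add_mem' := fun hx hy => by
          simp only [Set.mem_setOf_eq] at *; rw [map_add, hx, hy]; abel
        neg_mem' := fun hx => by
          simp only [Set.mem_setOf_eq] at *; rw [map_neg, hx] } with hB
    have hmemA : ∀ x, x ∈ A ↔ σ x = x := fun x => Iff.rfl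
    have hmemB : ∀ x, x ∈ B ↔ σ x = -x := fun x => Iff.rfl
    have hcompl : IsCompl A B := by
      constructor
      · rw [AddSubgroup.disjoint_def]
        intro x hxA hxB
        have h2 : (2:ℤ) • x = 0 := by
          have := (hmemA x).mp hxA
          rw [(hmemB x).mp hxB] at this
          rw [two_smul]
          rw [← sub_neg_eq_add, sub_eq_zero]
          exact this.symm
        exact htf0 2 x (by norm_num) h2
      · rw [codisjoint_iff_le_sup]
        intro x _
        obtain ⟨y, w, hy, hw, rfl⟩ := hAB x
        exact AddSubgroup.mem_sup.mpr ⟨y, hy, w, hw, rfl⟩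
    rcases hindec A B (fun x hx => by rw [hmemA] at *; rw [hx]; exact hx)
      (fun x hx => by
        rw [hmemB] at *
        rw [hx, map_neg, hx]) hcompl with h | h
    · -- A = ⊥ : σ = -id
      have hneg : ∀ x, σ x = -x := by
        intro x
        have hm : x + σ x ∈ A := by
          rw [hmemA, map_add, hσ]; abel
        rw [h, AddSubgroup.mem_bot] at hm
        exact eq_neg_of_add_eq_zero_left (by rw [add_comm]; exact hm)
      refine Or.inr (Or.inl ?_)
      obtain ⟨e⟩ := equiv_int_of_indec Λ (fun A' B' hc =>
        hindec A' B' (fun x hx => by rw [hneg]; exact A'.neg_mem hx)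
          (fun x hx => by rw [hneg]; exact B'.neg_mem hx) hc)
      exact ⟨e, fun x => by rw [hneg, map_neg]⟩
    · -- B = ⊥ : σ = id
      have hid : ∀ x, σ x = x := by
        intro x
        have hm : x - σ x ∈ B := by
          rw [hmemB, map_sub, hσ]; abel
        rw [h, AddSubgroup.mem_bot, sub_eq_zero] at hm
        exact hm.symm
      refine Or.inl ?_
      obtain ⟨e⟩ := equiv_int_of_indec Λ (fun A' B' hc =>
        hindec A' B' (fun x hx => by rw [hid]; exact hx)
          (fun x hx => by rw [hid]; exact hx) hc)
      exact ⟨e, fun x => by rw [hid]⟩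
  · -- mixed case
    push_neg at hAB
    obtain ⟨z, hz⟩ := hAB
    refine Or.inr (Or.inr ?_)
    set A : Submodule ℤ Λ :=
      { carrier := {x | σ x = x}
        zero_mem' := map_zero σ
        add_mem' := fun hx hy => by
          simp only [Set.mem_setOf_eq] at *; rw [map_add, hx, hy]
        smul_mem' := fun k x hx => by
          simp only [Set.mem_setOf_eq] at *; rw [map_zsmul, hx] } with hA
    set B : Submodule ℤ Λ :=
      { carrier := {x | σ x = -x}
        zero_mem' := by simp [map_zero σ]
        add_mem' := fun hx hy => by
          simp only [Set.mem_setOf_eq] at *; rw [map_add, hx, hy]; abel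
        smul_mem' := fun k x hx => by
          simp only [Set.mem_setOf_eq] at *; rw [map_zsmul, hx, smul_neg] } with hAB'
    have hmemA : ∀ x, x ∈ A ↔ σ x = x := fun x => Iff.rfl
    have hmemB : ∀ x, x ∈ B ↔ σ x = -x := fun x => Iff.rfl
    have htfA : ∀ (k : ℤ) (x : Λ), k ≠ 0 → k • x ∈ A → x ∈ A := by
      intro k x hk h
      rw [hmemA] at *
      rw [map_zsmul] at h
      have : k • (σ x - x) = 0 := by rw [smul_sub, h, sub_self]
      have := htf0 k _ hk this
      rwa [sub_eq_zero] at this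
    have htfB : ∀ (k : ℤ) (x : Λ), k ≠ 0 → k • x ∈ B → x ∈ B := by
      intro k x hk h
      rw [hmemB] at *
      rw [map_zsmul, ← smul_neg] at h
      have : k • (σ x - -x) = 0 := by rw [smul_sub, h, sub_self]
      have := htf0 k _ hk this
      rwa [sub_eq_zero] at this
    obtain ⟨pA, hpAmem, hpAid⟩ := exists_retraction A htfA
    obtain ⟨pB, hpBmem, hpBid⟩ := exists_retraction B htfB
    obtain ⟨a, ha'⟩ : ∃ t : Λ, t = z + σ z := ⟨_, rfl⟩
    obtain ⟨b, hb'⟩ : ∃ t : Λ, t = z - σ z := ⟨_, rfl⟩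
    have haA : a ∈ A := by rw [hmemA, ha', map_add, hσ]; abel
    have hbB : b ∈ B := by rw [hmemB, hb', map_sub, hσ]; abel
    have h2a : ∀ y : Λ, a ≠ (2:ℤ) • y := by
      intro y hy
      have hσy : σ y = y := by
        apply htfA 2 y (by norm_num)
        rw [← hy]
        exact haA
      refine hz y (z - y) hσy ?_ (by abel)
      rw [map_sub, hσy]
      have : σ z = (2:ℤ) • y - z := by rw [← hy, ha']; abel
      rw [this, two_smul]; abel
    have h2b : ∀ y : Λ, b ≠ (2:ℤ) • y := by
      intro y hy
      have hσy : σ y = -y := by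
        apply htfB 2 y (by norm_num)
        rw [← hy]
        exact hbB
      refine hz (z - y) y ?_ hσy (by abel)
      rw [map_sub, hσy]
      have : σ z = z - (2:ℤ) • y := by rw [← hy, hb']; abel
      rw [this, two_smul]; abel
    obtain ⟨α, φ₁, hαA, hφ₁⟩ := exists_unit_functional A pA hpAmem hpAid a haA h2a
    obtain ⟨β, φ₂, hβB, hφ₂⟩ := exists_unit_functional B pB hpBmem hpBid b hbB h2b
    obtain ⟨a', ha''⟩ : ∃ t : Λ, t = a + (2:ℤ) • α := ⟨_, rfl⟩
    obtain ⟨b', hb''⟩ : ∃ t : Λ, t = b + (2:ℤ) • β := ⟨_, rfl⟩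
    have hφ₁' : φ₁ a' = 1 := by rw [ha'']; exact hφ₁
    have hφ₂' : φ₂ b' = 1 := by rw [hb'']; exact hφ₂
    have hσa' : σ a' = a' := by
      have h1 := (hmemA a).mp haA
      have h2 := (hmemA α).mp (by exact hαA)
      rw [ha'', map_add, map_zsmul, h1, h2]
    have hσb' : σ b' = -b' := by
      have h1 := (hmemB b).mp hbB
      have h2 := (hmemB β).mp (by exact hβB)
      rw [hb'', map_add, map_zsmul, h1, h2, smul_neg]; abel
    obtain ⟨z', hz''⟩ : ∃ t : Λ, t = z + α + β := ⟨_, rfl⟩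
    have hσz' : σ z' = σ z + α - β := by
      rw [hz'', map_add, map_add, (hmemA α).mp hαA, (hmemB β).mp hβB]; abel
    have hsum : z' + σ z' = a' := by rw [hσz', hz'', ha'', ha', two_smul]; abel
    have hdiff : z' - σ z' = b' := by rw [hσz', hz'', hb'', hb', two_smul]; abel
    -- build φ with φ a' = 1, φ b' = 1
    obtain ⟨k, hk⟩ : ∃ t : ℤ, t = φ₁ b' := ⟨_, rfl⟩
    obtain ⟨m, hm⟩ : ∃ t : ℤ, t = φ₂ a' := ⟨_, rfl⟩
    set φ₄ : Λ →+ ℤ := φ₂ - φ₂.comp σ with hφ₄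
    have hφ₄a : φ₄ a' = 0 := by
      simp only [hφ₄, AddMonoidHom.sub_apply, AddMonoidHom.comp_apply, hσa', sub_self]
    have hφ₄b : φ₄ b' = 2 := by
      simp only [hφ₄, AddMonoidHom.sub_apply, AddMonoidHom.comp_apply, hσb', map_neg, hφ₂']
      omega
    have hφ : ∃ φ : Λ →+ ℤ, φ a' = 1 ∧ φ b' = 1 := by
      rcases Int.even_or_odd k with ⟨j, hj⟩ | ⟨j, hj⟩
      · refine ⟨(φ₁ - j • φ₄) + φ₂ - m • (φ₁ - j • φ₄), ?_, ?_⟩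
        · simp only [AddMonoidHom.sub_apply, AddMonoidHom.add_apply, AddMonoidHom.smul_apply,
            hφ₁', hφ₄a, smul_eq_mul, ← hm]
          ring
        · simp only [AddMonoidHom.sub_apply, AddMonoidHom.add_apply, AddMonoidHom.smul_apply,
            hφ₂', hφ₄b, smul_eq_mul, ← hk]
          rw [hj]; ring
      · refine ⟨φ₁ - j • φ₄, ?_, ?_⟩
        · simp only [AddMonoidHom.sub_apply, AddMonoidHom.smul_apply, hφ₁', hφ₄a,
            smul_eq_mul]
          ring
        · simp only [AddMonoidHom.sub_apply, AddMonoidHom.smul_apply, hφ₄b,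
            smul_eq_mul, ← hk]
          rw [hj]; ring
    obtain ⟨φ, hφa, hφb⟩ := hφ
    have hφz' : φ z' = 1 := by
      have h1 : (2:ℤ) • z' = a' + b' := by rw [← hsum, ← hdiff, two_smul]; abel
      have h2 : (2:ℤ) * φ z' = 2 := by
        have := congrArg φ h1
        rw [map_zsmul, map_add, hφa, hφb] at this
        simpa [smul_eq_mul] using this
      omega
    have hφσz' : φ (σ z') = 0 := by
      have h1 : (2:ℤ) • σ z' = a' - b' := by rw [← hsum, ← hdiff, two_smul]; abel
      have h2 : (2:ℤ) * φ (σ z') = 0 := by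
        have := congrArg φ h1
        rw [map_zsmul, map_sub, hφa, hφb] at this
        simpa [smul_eq_mul] using this
      omega
    set Φ : Λ →+ Λ :=
      { toFun := fun x => φ x • z' + φ (σ x) • σ z'
        map_zero' := by simp
        map_add' := fun x y => by
          show φ (x + y) • z' + φ (σ (x + y)) • σ z' = _
          rw [map_add, map_add, map_add, add_smul, add_smul]
          abel } with hΦ
    have hΦapp : ∀ x, Φ x = φ x • z' + φ (σ x) • σ z' := fun x => rfl
    have hΦσ : ∀ x, Φ (σ x) = σ (Φ x) := by
      intro x
      rw [hΦapp, hΦapp, hσ, map_add, map_zsmul, map_zsmul, hσ]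
      abel
    have hidem : ∀ x, Φ (Φ x) = Φ x := by
      intro x
      have e1 : φ (Φ x) = φ x := by
        rw [hΦapp, map_add, map_zsmul, map_zsmul, hφz', hφσz']
        simp
      have e2 : φ (σ (Φ x)) = φ (σ x) := by
        rw [← hΦσ, hΦapp (σ x), map_add, map_zsmul, map_zsmul, hφz', hφσz', hσ]
        simp
      rw [hΦapp (Φ x), e1, e2, hΦapp]
    have hΦz' : Φ z' = z' := by rw [hΦapp, hφz', hφσz']; simp
    rcases hindec Φ.range Φ.ker
      (by rintro x ⟨y, rfl⟩; exact ⟨σ y, hΦσ y⟩)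
      (by
        intro x hx
        rw [AddMonoidHom.mem_ker] at *
        rw [hΦσ, hx, map_zero])
      (isCompl_of_idem Φ hidem) with h | h
    · exfalso
      have : z' ∈ Φ.range := ⟨z', hΦz'⟩
      rw [h, AddSubgroup.mem_bot] at this
      rw [this, map_zero] at hφz'
      exact one_ne_zero hφz'.symm
    · have hΦid : ∀ x, Φ x = x := by
        intro x
        have : Φ (Φ x - x) = 0 := by rw [map_sub, hidem, sub_self]
        have : Φ x - x ∈ Φ.ker := this
        rw [h, AddSubgroup.mem_bot, sub_eq_zero] at this
        exact this
      refine ⟨{ toFun := fun x => (φ x, φ (σ x))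
                invFun := fun q => q.1 • z' + q.2 • σ z'
                left_inv := fun x => by
                  show φ x • z' + φ (σ x) • σ z' = x
                  rw [← hΦapp, hΦid]
                right_inv := fun q => by
                  have hσq : σ (q.1 • z' + q.2 • σ z') = q.1 • σ z' + q.2 • z' := by
                    rw [map_add, map_zsmul, map_zsmul, hσ]
                  apply Prod.ext
                  · show φ (q.1 • z' + q.2 • σ z') = q.1
                    rw [map_add, map_zsmul, map_zsmul, hφz', hφσz']
                    simp
                  · show φ (σ (q.1 • z' + q.2 • σ z')) = q.2
                    rw [hσq, map_add, map_zsmul, map_zsmul, hφz', hφσz']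
                    simp
                map_add' := fun x y => by
                  show (φ (x + y), φ (σ (x + y))) = _
                  rw [map_add, map_add, map_add]
                  rfl },
        fun x => by
          show (φ (σ x), φ (σ (σ x))) = Prod.swap (φ x, φ (σ x))
          rw [hσ]
          rfl⟩
lemma congrAdd_mk {G H : Type*} [AddGroup G] [AddGroup H] (G' : AddSubgroup G)
    (H' : AddSubgroup H) [G'.Normal] [H'.Normal] (e : G ≃+ H)
    (he : AddSubgroup.map (↑e) G' = H') (x : G) :
    QuotientAddGroup.congr G' H' e he (QuotientAddGroup.mk x) = QuotientAddGroup.mk (e x) :=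
  rfl

section TorusLemmas

lemma σV_tmul (Λ : Type) [AddCommGroup Λ] (σ : Λ →+ Λ) (r : ℝ) (x : Λ) :
    σV Λ σ (r ⊗ₜ x) = r ⊗ₜ (σ x) := by
  simp [σV, LinearMap.lTensor_tmul]

lemma σT_mk (Λ : Type) [AddCommGroup Λ] (σ : Λ →+ Λ) (v : VR Λ) :
    σT Λ σ (QuotientAddGroup.mk v) = QuotientAddGroup.mk (σV Λ σ v) := rfl

lemma torusT_mk_surjective (Λ : Type) [AddCommGroup Λ] :
    Function.Surjective (QuotientAddGroup.mk : VR Λ → TorusT Λ) :=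
  QuotientAddGroup.mk_surjective

/-- Transfer of the torus along a lattice isomorphism intertwining the involutions. -/
lemma torus_transfer {Λ Λ' : Type} [AddCommGroup Λ] [AddCommGroup Λ']
    (e : Λ ≃+ Λ') (σ : Λ →+ Λ) (σ' : Λ' →+ Λ') (hcomm : ∀ x, e (σ x) = σ' (e x)) :
    ∃ E : TorusT Λ ≃+ TorusT Λ', ∀ t, E (σT Λ σ t) = σT Λ' σ' (E t) := by
  classical
  set eV : VR Λ ≃+ VR Λ' :=
    (TensorProduct.congr (LinearEquiv.refl ℤ ℝ) e.toIntLinearEquiv).toAddEquiv with heVdef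
  have heV : ∀ (r : ℝ) (x : Λ), eV (r ⊗ₜ x) = r ⊗ₜ e x := by
    intro r x
    rw [heVdef]
    show (TensorProduct.congr (LinearEquiv.refl ℤ ℝ) e.toIntLinearEquiv) (r ⊗ₜ x) = _
    rw [TensorProduct.congr_tmul]
    simp
  have hmap : (latticeSub Λ).map (↑eV) = latticeSub Λ' := by
    apply le_antisymm
    · rintro _ ⟨_, ⟨x, rfl⟩, rfl⟩
      refine ⟨e x, ?_⟩
      show ((TensorProduct.mk ℤ ℝ Λ') 1) (e x) = eV (((TensorProduct.mk ℤ ℝ Λ) 1) x)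
      rw [TensorProduct.mk_apply, TensorProduct.mk_apply, heV]
    · rintro _ ⟨y, rfl⟩
      refine ⟨(1:ℝ) ⊗ₜ e.symm y, ⟨e.symm y, rfl⟩, ?_⟩
      show eV ((1:ℝ) ⊗ₜ e.symm y) = ((TensorProduct.mk ℤ ℝ Λ') 1) y
      rw [heV]
      simp
  refine ⟨QuotientAddGroup.congr _ _ eV hmap, ?_⟩
  intro t
  obtain ⟨v, rfl⟩ := torusT_mk_surjective Λ t
  rw [σT_mk, congrAdd_mk, congrAdd_mk, σT_mk]
  congr 1
  induction v using TensorProduct.induction_on with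
  | zero => simp
  | tmul r x => rw [σV_tmul, heV, heV, σV_tmul, hcomm]
  | add u w hu hw => rw [map_add, map_add, map_add, map_add, hu, hw]

/-- The concrete circle description of `TorusT ℤ`. -/
lemma torus_int : ∃ E : TorusT ℤ ≃+ 𝕊,
    ∀ (σ : ℤ →+ ℤ) (t : TorusT ℤ), E (σT ℤ σ t) = (σ 1) • E t := by
  classical
  set eV : VR ℤ ≃+ ℝ := (TensorProduct.rid ℤ ℝ).toAddEquiv with heVdef
  have heV : ∀ (r : ℝ) (n : ℤ), eV (r ⊗ₜ n) = n • r := by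
    intro r n
    rw [heVdef]
    show (TensorProduct.rid ℤ ℝ) (r ⊗ₜ n) = n • r
    rw [TensorProduct.rid_tmul]
  have hmap : (latticeSub ℤ).map (↑eV) = AddSubgroup.zmultiples (1:ℝ) := by
    apply le_antisymm
    · rintro _ ⟨_, ⟨n, rfl⟩, rfl⟩
      refine AddSubgroup.mem_zmultiples_iff.mpr ⟨n, ?_⟩
      show n • (1:ℝ) = eV (((TensorProduct.mk ℤ ℝ ℤ) 1) n)
      rw [TensorProduct.mk_apply, heV]
    · rintro x hx
      obtain ⟨n, rfl⟩ := AddSubgroup.mem_zmultiples_iff.mp hx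
      refine ⟨(1:ℝ) ⊗ₜ n, ⟨n, rfl⟩, ?_⟩
      show eV ((1:ℝ) ⊗ₜ n) = n • (1:ℝ)
      rw [heV]
  refine ⟨QuotientAddGroup.congr _ _ eV hmap, ?_⟩
  intro σ t
  obtain ⟨v, rfl⟩ := torusT_mk_surjective ℤ t
  have key : eV (σV ℤ σ v) = σ 1 • eV v := by
    induction v using TensorProduct.induction_on with
    | zero => simp
    | tmul r n =>
        rw [σV_tmul, heV, heV]
        have hσn : σ n = σ 1 * n := by
          simpa [smul_eq_mul, mul_comm] using map_zsmul σ n 1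
        rw [hσn, mul_smul]
    | add u w hu hw => rw [map_add, map_add, hu, hw, map_add, smul_add]
  rw [σT_mk, congrAdd_mk, key, congrAdd_mk]
  exact (map_zsmul (QuotientAddGroup.mk' (AddSubgroup.zmultiples (1:ℝ))) (σ 1) (eV v)).symm

noncomputable def swapHom : ℤ × ℤ →+ ℤ × ℤ :=
  (AddEquiv.prodComm : ℤ × ℤ ≃+ ℤ × ℤ).toAddMonoidHom

lemma swapHom_apply (p : ℤ × ℤ) : swapHom p = p.swap := rfl

lemma torus_prod : ∃ E : TorusT (ℤ × ℤ) ≃+ 𝕊 × 𝕊,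
    ∀ t, E (σT (ℤ × ℤ) swapHom t) = Prod.swap (E t) := by
  classical
  set eV : VR (ℤ × ℤ) ≃+ ℝ × ℝ :=
    ((TensorProduct.prodRight ℤ ℤ ℝ ℤ ℤ).trans
      ((TensorProduct.rid ℤ ℝ).prodCongr (TensorProduct.rid ℤ ℝ))).toAddEquiv with heVdef
  have heV : ∀ (r : ℝ) (p : ℤ × ℤ), eV (r ⊗ₜ p) = (p.1 • r, p.2 • r) := by
    intro r p
    rw [heVdef]
    show ((TensorProduct.prodRight ℤ ℤ ℝ ℤ ℤ).trans
      ((TensorProduct.rid ℤ ℝ).prodCongr (TensorProduct.rid ℤ ℝ))) (r ⊗ₜ p) = _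
    rw [LinearEquiv.trans_apply]
    rw [show (r ⊗ₜ p : ℝ ⊗[ℤ] (ℤ × ℤ)) = r ⊗ₜ (p.1, p.2) from rfl]
    rw [TensorProduct.prodRight_tmul]
    show ((TensorProduct.rid ℤ ℝ) (r ⊗ₜ p.1), (TensorProduct.rid ℤ ℝ) (r ⊗ₜ p.2)) = _
    rw [TensorProduct.rid_tmul, TensorProduct.rid_tmul]
  set ZZ : AddSubgroup (ℝ × ℝ) :=
    (AddSubgroup.zmultiples (1:ℝ)).prod (AddSubgroup.zmultiples (1:ℝ)) with hZZ
  have hmap : (latticeSub (ℤ × ℤ)).map (↑eV) = ZZ := by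
    apply le_antisymm
    · rintro _ ⟨_, ⟨p, rfl⟩, rfl⟩
      have hev : eV (((TensorProduct.mk ℤ ℝ (ℤ × ℤ)) 1) p) = ((p.1 : ℝ), (p.2 : ℝ)) := by
        rw [TensorProduct.mk_apply, heV]
        simp
      have hmem : ((p.1 : ℝ), (p.2 : ℝ)) ∈ ZZ := by
        rw [hZZ]
        exact AddSubgroup.mem_prod.mpr
          ⟨AddSubgroup.mem_zmultiples_iff.mpr ⟨p.1, by simp⟩,
           AddSubgroup.mem_zmultiples_iff.mpr ⟨p.2, by simp⟩⟩
      rwa [← hev] at hmem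
    · rintro ⟨x, y⟩ hxy
      rw [hZZ, AddSubgroup.mem_prod] at hxy
      obtain ⟨m, hm⟩ := AddSubgroup.mem_zmultiples_iff.mp hxy.1
      obtain ⟨n, hn⟩ := AddSubgroup.mem_zmultiples_iff.mp hxy.2
      refine ⟨(1:ℝ) ⊗ₜ (m, n), ⟨(m, n), rfl⟩, ?_⟩
      show eV ((1:ℝ) ⊗ₜ (m, n)) = (x, y)
      rw [heV]
      exact Prod.ext hm hn
  set fhom : ℝ × ℝ →+ 𝕊 × 𝕊 :=
    (QuotientAddGroup.mk' (AddSubgroup.zmultiples (1:ℝ))).prodMap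
      (QuotientAddGroup.mk' (AddSubgroup.zmultiples (1:ℝ))) with hfhom
  have hfsurj : Function.Surjective fhom := by
    rintro ⟨p, q⟩
    obtain ⟨x, rfl⟩ := QuotientAddGroup.mk_surjective p
    obtain ⟨y, rfl⟩ := QuotientAddGroup.mk_surjective q
    exact ⟨(x, y), rfl⟩
  have hker : fhom.ker = ZZ := by
    ext ⟨x, y⟩
    rw [AddMonoidHom.mem_ker, hZZ, AddSubgroup.mem_prod]
    constructor
    · intro h
      have h1 := congrArg Prod.fst h
      have h2 := congrArg Prod.snd h
      constructor
      · rwa [← QuotientAddGroup.eq_zero_iff]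
      · rwa [← QuotientAddGroup.eq_zero_iff]
    · rintro ⟨h1, h2⟩
      have e1 : (QuotientAddGroup.mk x : 𝕊) = 0 := (QuotientAddGroup.eq_zero_iff x).mpr h1
      have e2 : (QuotientAddGroup.mk y : 𝕊) = 0 := (QuotientAddGroup.eq_zero_iff y).mpr h2
      show (QuotientAddGroup.mk x, QuotientAddGroup.mk y) = ((0 : 𝕊), (0 : 𝕊))
      rw [e1, e2]
  refine ⟨(QuotientAddGroup.congr _ _ eV hmap).trans
    ((QuotientAddGroup.quotientAddEquivOfEq hker.symm).trans
      (QuotientAddGroup.quotientKerEquivOfSurjective fhom hfsurj)), ?_⟩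
  intro t
  obtain ⟨v, rfl⟩ := torusT_mk_surjective (ℤ × ℤ) t
  have key : eV (σV (ℤ × ℤ) swapHom v) = Prod.swap (eV v) := by
    induction v using TensorProduct.induction_on with
    | zero => simp
    | tmul r p => rw [σV_tmul, heV, swapHom_apply, heV]; rfl
    | add u w hu hw => rw [map_add, map_add, hu, hw, map_add, Prod.swap_add]
  have hE : ∀ (w : VR (ℤ × ℤ)),
      ((QuotientAddGroup.congr _ _ eV hmap).trans
        ((QuotientAddGroup.quotientAddEquivOfEq hker.symm).trans
          (QuotientAddGroup.quotientKerEquivOfSurjective fhom hfsurj)))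
        (QuotientAddGroup.mk w) = fhom (eV w) := fun w => rfl
  rw [σT_mk, hE, hE, key]
  rfl

lemma circle_two_torsion (x : 𝕊) (h : x + x = 0) :
    x = 0 ∨ x = (((1 : ℝ)/2 : ℝ) : 𝕊) := by
  obtain ⟨r, rfl⟩ := QuotientAddGroup.mk_surjective x
  have h1 : r + r ∈ AddSubgroup.zmultiples (1:ℝ) := by
    rwa [← QuotientAddGroup.eq_zero_iff]
  obtain ⟨n, hn⟩ := AddSubgroup.mem_zmultiples_iff.mp h1
  rw [zsmul_eq_mul, mul_one] at hn
  rcases Int.even_or_odd n with ⟨j, hj⟩ | ⟨j, hj⟩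
  · left
    rw [QuotientAddGroup.eq_zero_iff]
    refine AddSubgroup.mem_zmultiples_iff.mpr ⟨j, ?_⟩
    rw [zsmul_eq_mul, mul_one]
    have : (n : ℝ) = (j : ℝ) + (j : ℝ) := by rw [hj]; push_cast; ring
    linarith
  · right
    have hsub : ((QuotientAddGroup.mk (r - 1/2) : 𝕊)) = 0 := by
      rw [QuotientAddGroup.eq_zero_iff]
      refine AddSubgroup.mem_zmultiples_iff.mpr ⟨j, ?_⟩
      rw [zsmul_eq_mul, mul_one]
      have : (n : ℝ) = 2*(j : ℝ) + 1 := by rw [hj]; push_cast; ring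
      linarith
    have : ((QuotientAddGroup.mk r : 𝕊)) - ((QuotientAddGroup.mk (1/2 : ℝ) : 𝕊)) = 0 := by
      rw [← hsub]
      rfl
    rw [sub_eq_zero] at this
    exact this
  
lemma circle_half_exists (x : 𝕊) : ∃ d : 𝕊, d + d = x := by
  obtain ⟨r, rfl⟩ := QuotientAddGroup.mk_surjective x
  refine ⟨QuotientAddGroup.mk (r/2), ?_⟩
  show QuotientAddGroup.mk (r/2 + r/2) = _
  norm_num

/-- Let `T = (Λ ⊗ ℝ)/Λ` be a torus built from a finitely generated
free abelian group `Λ` with involution `σ` that is *indecomposable* as an integral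
representation of `ℤ/2`, and let `τ t = σ t + c` (with `c + σ c = 0`) be an affine
involution on `T` with linear part `σ`.  Then, up to `ℤ/2`-equivariant affine
isomorphism, `(T, τ)` is one of exactly four types:
(1) `ℝ/ℤ` with `σ t = t`; (2) `ℝ/ℤ` with `σ t = t + 1/2`; (3) `ℝ/ℤ` with `σ t = -t`;
(4) `ℝ²/ℤ²` with `σ (t₁, t₂) = (t₂, t₁)`. -/
theorem stmt10 (Λ : Type) [AddCommGroup Λ] [Module.Free ℤ Λ] [Module.Finite ℤ Λ]
    [Nontrivial Λ]
    (σ : Λ →+ Λ) (hσ : ∀ x, σ (σ x) = x)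
    (hindec : ∀ A B : AddSubgroup Λ, (∀ x ∈ A, σ x ∈ A) → (∀ x ∈ B, σ x ∈ B) →
      IsCompl A B → A = ⊥ ∨ B = ⊥)
    (c : TorusT Λ) (hc : c + σT Λ σ c = 0) :
    (∃ (L : TorusT Λ ≃+ 𝕊) (d : 𝕊),
        ∀ t, L (σT Λ σ t + c) + d = L t + d) ∨
    (∃ (L : TorusT Λ ≃+ 𝕊) (d : 𝕊),
        ∀ t, L (σT Λ σ t + c) + d = (L t + d) + (((1 : ℝ)/2 : ℝ) : 𝕊)) ∨
    (∃ (L : TorusT Λ ≃+ 𝕊) (d : 𝕊),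
        ∀ t, L (σT Λ σ t + c) + d = -(L t + d)) ∨
    (∃ (L : TorusT Λ ≃+ 𝕊 × 𝕊) (d : 𝕊 × 𝕊),
        ∀ t, L (σT Λ σ t + c) + d = Prod.swap (L t + d)) := by
  classical
  rcases classifyRep Λ σ hσ hindec with ⟨e, he⟩ | ⟨e, he⟩ | ⟨e, he⟩
  · -- trivial linear part
    obtain ⟨E, hE⟩ := torus_transfer e σ (AddMonoidHom.id ℤ) (fun x => by rw [he]; rfl)
    obtain ⟨E1, hE1⟩ := torus_int
    set L : TorusT Λ ≃+ 𝕊 := E.trans E1 with hL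
    have hLσ : ∀ t, L (σT Λ σ t) = L t := by
      intro t
      show E1 (E (σT Λ σ t)) = E1 (E t)
      rw [hE, hE1]
      show ((AddMonoidHom.id ℤ) 1) • E1 (E t) = E1 (E t)
      simp
    have h2 : L c + L c = 0 := by
      have h0 := congrArg L hc
      rw [map_add, map_zero, hLσ] at h0
      exact h0
    rcases circle_two_torsion (L c) h2 with h0 | hhalf
    · refine Or.inl ⟨L, 0, fun t => ?_⟩
      rw [map_add, hLσ, h0, add_zero, add_zero]
    · refine Or.inr (Or.inl ⟨L, 0, fun t => ?_⟩)
      rw [map_add, hLσ, hhalf, add_zero, add_zero]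
  · -- sign linear part
    obtain ⟨E, hE⟩ := torus_transfer e σ (-(AddMonoidHom.id ℤ)) (fun x => by rw [he]; rfl)
    obtain ⟨E1, hE1⟩ := torus_int
    set L : TorusT Λ ≃+ 𝕊 := E.trans E1 with hL
    have hLσ : ∀ t, L (σT Λ σ t) = -(L t) := by
      intro t
      show E1 (E (σT Λ σ t)) = -(E1 (E t))
      rw [hE, hE1]
      show ((-(AddMonoidHom.id ℤ)) 1) • E1 (E t) = -(E1 (E t))
      simp
    obtain ⟨d, hd⟩ := circle_half_exists (-(L c))
    refine Or.inr (Or.inr (Or.inl ⟨L, d, fun t => ?_⟩))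
    have hLc : L c = -d - d := by
      rw [← neg_neg (L c), ← hd]
      abel
    rw [map_add, hLσ, hLc]
    abel
  · -- regular (swap) linear part
    obtain ⟨E, hE⟩ := torus_transfer e σ swapHom (fun x => by rw [he, swapHom_apply])
    obtain ⟨E2, hE2⟩ := torus_prod
    set L : TorusT Λ ≃+ 𝕊 × 𝕊 := E.trans E2 with hL
    have hLσ : ∀ t, L (σT Λ σ t) = Prod.swap (L t) := by
      intro t
      show E2 (E (σT Λ σ t)) = Prod.swap (E2 (E t))
      rw [hE, hE2]
    have h2 : L c + Prod.swap (L c) = 0 := by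
      have h0 := congrArg L hc
      rw [map_add, map_zero, hLσ] at h0
      exact h0
    have hc1 : (L c).1 + (L c).2 = 0 := by
      have := congrArg Prod.fst h2
      simpa using this
    have hc2 : (L c).2 = -((L c).1) :=
      eq_neg_of_add_eq_zero_left (by rw [add_comm]; exact hc1)
    refine Or.inr (Or.inr (Or.inr ⟨L, (-((L c).1), 0), fun t => ?_⟩))
    rw [map_add, hLσ]
    apply Prod.ext
    · simp only [Prod.fst_add, Prod.fst_swap, Prod.snd_add]
      abel
    · simp only [Prod.snd_add, Prod.snd_swap, Prod.fst_add, hc2]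
      abel
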